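/- Let Φ be of class 𝒫 with parameters 1 < p < q < ∞, let Φ̃ be its complementary Young function, and let p', q' denote the Hölder conjugates of p, q. Then the constant K = ∫₀^∞ max(u^{1/q' − 1}, u^{1/p' − 1})·e^{−u} du is finite, and for every s > 0: ∫₀^∞ e^{−st} / (t·Φ̃⁻¹(1/t)) dt ≤ K / Φ̃⁻¹(s). -/

import Mathlib

open MeasureTheory Set Filter Topology ENNReal

noncomputable section

/-- `Φ` is of class `𝒫` with parameters `1 < p < q < ∞`. -/
def IsClassP (Φ Φinv : ℝ → ℝ) (p q : ℝ) : Prop :=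
  1 < p ∧ p < q ∧
  (∀ t : ℝ, 0 < t → 0 < Φ t) ∧ (∀ t : ℝ, 0 < t → 0 < Φinv t) ∧
  (∀ t : ℝ, 0 < t → Φinv (Φ t) = t) ∧ (∀ t : ℝ, 0 < t → Φ (Φinv t) = t) ∧
  ∃ ρ : ℝ → ℝ, ContinuousOn ρ (Set.Ioi 0) ∧ ConcaveOn ℝ (Set.Ioi 0) ρ ∧
    (∀ t : ℝ, 0 < t → 0 < ρ t) ∧
    (∀ s t : ℝ, 0 < s → 0 < t → ρ (s * t) ≤ max 1 s * ρ t) ∧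
    (∀ t : ℝ, 0 < t → Φinv t = t ^ (1/p) * ρ (t ^ (1/q - 1/p)))

lemma min_inv_eq' {a b : ℝ} (ha : 0 < a) (hb : 0 < b) : min a⁻¹ b⁻¹ = (max a b)⁻¹ := by
  rcases le_total a b with h | h
  · rw [max_eq_right h, min_eq_right (by gcongr)]
  · rw [max_eq_left h, min_eq_left (by gcongr)]

/-- for `Φ` of class `𝒫` with complementary Young function `Φ̃`
(with inverse `Φ̃⁻¹`), and Hölder conjugates `p' = p/(p−1)`, `q' = q/(q−1)`, the constant
`K = ∫₀^∞ max(u^{1/q'−1}, u^{1/p'−1})·e^{−u} du` is finite and for every `s > 0`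
`∫₀^∞ e^{−st}/(t·Φ̃⁻¹(1/t)) dt ≤ K/Φ̃⁻¹(s)`. -/
theorem integral_exp_div_complementary_bound
    (Φ Φinv Φt Φtinv : ℝ → ℝ) (p q : ℝ) (hΦ : IsClassP Φ Φinv p q)
    (hΦ0 : Φ 0 = 0)
    (hΦt : ∀ s : ℝ, Φt s = sSup {x : ℝ | ∃ t : ℝ, 0 ≤ t ∧ x = s * t - Φ t})
    (hΦtinvpos : ∀ s : ℝ, 0 < s → 0 < Φtinv s)
    (hΦtinv1 : ∀ t : ℝ, 0 < t → Φtinv (Φt t) = t)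
    (hΦtinv2 : ∀ s : ℝ, 0 < s → Φt (Φtinv s) = s) :
    (∫⁻ u in Set.Ioi (0:ℝ),
        ENNReal.ofReal (max (u ^ (1 / (q / (q - 1)) - 1)) (u ^ (1 / (p / (p - 1)) - 1)) *
          Real.exp (-u))) < ∞ ∧
    ∀ s : ℝ, 0 < s →
      (∫⁻ t in Set.Ioi (0:ℝ), ENNReal.ofReal (Real.exp (-(s * t)) / (t * Φtinv (1/t))))
        ≤ (∫⁻ u in Set.Ioi (0:ℝ),
            ENNReal.ofReal (max (u ^ (1 / (q / (q - 1)) - 1)) (u ^ (1 / (p / (p - 1)) - 1)) *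
              Real.exp (-u))) / ENNReal.ofReal (Φtinv s) := by
  obtain ⟨hp1, hpq, hΦpos, hΦinvpos, hinv1, hinv2, ρ, -, -, hρpos, hρscale, hrep⟩ := hΦ
  have hq1 : 1 < q := hp1.trans hpq
  have hp0 : 0 < p := one_pos.trans hp1
  have hq0 : 0 < q := one_pos.trans hq1
  have hqne : q - 1 ≠ 0 := sub_ne_zero.mpr hq1.ne'
  have hpne : p - 1 ≠ 0 := sub_ne_zero.mpr hp1.ne'
  have hqc : 1 / (q / (q - 1)) = 1 - 1/q := by field_simp
  have hpc : 1 / (p / (p - 1)) = 1 - 1/p := by field_simp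
  simp only [hqc, hpc]
  have h1q : (0:ℝ) < 1/q := by positivity
  have h1p : (0:ℝ) < 1/p := by positivity
  have h1q1 : 1/q < 1 := by rw [div_lt_one hq0]; exact hq1
  have h1p1 : 1/p < 1 := by rw [div_lt_one hp0]; exact hp1
  have h1qp : 1/q ≤ 1/p := one_div_le_one_div_of_le hp0 hpq.le
  have hcq : (0:ℝ) < 1 - 1/q := sub_pos.mpr h1q1
  have hcp : (0:ℝ) < 1 - 1/p := sub_pos.mpr h1p1
  have hρ1 : 0 < ρ 1 := hρpos 1 one_pos
  -- combining the max
  have hmaxc : ∀ x : ℝ, 0 < x →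
      x ^ (1/p) * max 1 (x ^ (1/q - 1/p)) = max (x ^ (1/p)) (x ^ (1/q)) := by
    intro x hx
    have h : 1/p + (1/q - 1/p) = 1/q := by ring
    rw [mul_max_of_nonneg _ _ (Real.rpow_nonneg hx.le _), mul_one, ← Real.rpow_add hx, h]
  -- upper bound on Φinv
  have L1 : ∀ x : ℝ, 0 < x → Φinv x ≤ max (x ^ (1/p)) (x ^ (1/q)) * ρ 1 := by
    intro x hx
    rw [hrep x hx]
    calc x ^ (1/p) * ρ (x ^ (1/q - 1/p)) = x ^ (1/p) * ρ (x ^ (1/q - 1/p) * 1) := by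
          rw [mul_one]
      _ ≤ x ^ (1/p) * (max 1 (x ^ (1/q - 1/p)) * ρ 1) :=
          mul_le_mul_of_nonneg_left
            (hρscale _ 1 (Real.rpow_pos_of_pos hx _) one_pos) (Real.rpow_nonneg hx.le _)
      _ = max (x ^ (1/p)) (x ^ (1/q)) * ρ 1 := by rw [← mul_assoc, hmaxc x hx]
  -- scaling inequality for Φinv
  have L2 : ∀ u t : ℝ, 0 < u → 0 < t →
      Φinv (u * t) ≤ max (u ^ (1/p)) (u ^ (1/q)) * Φinv t := by
    intro u t hu ht
    rw [hrep _ (mul_pos hu ht), hrep t ht, Real.mul_rpow hu.le ht.le,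
      Real.mul_rpow hu.le ht.le]
    calc u ^ (1/p) * t ^ (1/p) * ρ (u ^ (1/q - 1/p) * t ^ (1/q - 1/p))
        ≤ u ^ (1/p) * t ^ (1/p) * (max 1 (u ^ (1/q - 1/p)) * ρ (t ^ (1/q - 1/p))) := by
          refine mul_le_mul_of_nonneg_left
            (hρscale _ _ (Real.rpow_pos_of_pos hu _) (Real.rpow_pos_of_pos ht _)) ?_
          positivity
      _ = (u ^ (1/p) * max 1 (u ^ (1/q - 1/p))) * (t ^ (1/p) * ρ (t ^ (1/q - 1/p))) := by
          ring
      _ = max (u ^ (1/p)) (u ^ (1/q)) * (t ^ (1/p) * ρ (t ^ (1/q - 1/p))) := by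
          rw [hmaxc u hu]
  -- the defining sets
  have hS0 : ∀ w : ℝ, (0:ℝ) ∈ {x : ℝ | ∃ t : ℝ, 0 ≤ t ∧ x = w * t - Φ t} :=
    fun w => ⟨0, le_refl 0, by simp [hΦ0]⟩
  have L3 : ∀ w : ℝ, 0 < w → ∀ x ∈ {x : ℝ | ∃ t : ℝ, 0 ≤ t ∧ x = w * t - Φ t},
      x ≤ w * max 1 ((ρ 1 * max (w ^ (1/p)) (w ^ (1/q))) ^ (1 - 1/p)⁻¹) := by
    intro w hw x hx
    obtain ⟨t, ht0, rfl⟩ := hx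
    set C : ℝ := ρ 1 * max (w ^ (1/p)) (w ^ (1/q)) with hC
    have hC0 : 0 < C := mul_pos hρ1 (lt_max_of_lt_left (Real.rpow_pos_of_pos hw _))
    set M : ℝ := w * max 1 (C ^ (1 - 1/p)⁻¹) with hM
    have hM0 : 0 ≤ M := mul_nonneg hw.le (le_trans zero_le_one (le_max_left _ _))
    rcases eq_or_lt_of_le ht0 with rfl | ht
    · simpa [hΦ0] using hM0
    have hgoal : t ≤ max 1 (C ^ (1 - 1/p)⁻¹) → w * t - Φ t ≤ M := by
      intro h
      have h2 : w * t ≤ M := mul_le_mul_of_nonneg_left h hw.le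
      have h3 := hΦpos t ht
      linarith
    rcases le_total t 1 with ht1 | ht1
    · exact hgoal (le_max_of_le_left ht1)
    · by_cases hwt : w * t - Φ t ≤ 0
      · exact hwt.trans hM0
      · push_neg at hwt
        have hΦlt : Φ t < w * t := by linarith
        have hΦtpos := hΦpos t ht
        have ht_le : t ≤ max ((w*t) ^ (1/p)) ((w*t) ^ (1/q)) * ρ 1 := by
          have h1 : t = Φinv (Φ t) := (hinv1 t ht).symm
          calc t = Φinv (Φ t) := h1
            _ ≤ max ((Φ t) ^ (1/p)) ((Φ t) ^ (1/q)) * ρ 1 := L1 _ hΦtpos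
            _ ≤ max ((w*t) ^ (1/p)) ((w*t) ^ (1/q)) * ρ 1 := by
                refine mul_le_mul_of_nonneg_right
                  (max_le_max (Real.rpow_le_rpow hΦtpos.le hΦlt.le h1p.le)
                    (Real.rpow_le_rpow hΦtpos.le hΦlt.le h1q.le)) hρ1.le
        have hts : t ≤ C * t ^ (1/p) := by
          have e1 : (w*t) ^ (1/p) = w ^ (1/p) * t ^ (1/p) := Real.mul_rpow hw.le ht.le
          have e2 : (w*t) ^ (1/q) = w ^ (1/q) * t ^ (1/q) := Real.mul_rpow hw.le ht.le
          have e3 : t ^ (1/q) ≤ t ^ (1/p) := Real.rpow_le_rpow_of_exponent_le ht1 h1qp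
          calc t ≤ max ((w*t) ^ (1/p)) ((w*t) ^ (1/q)) * ρ 1 := ht_le
            _ ≤ (max (w ^ (1/p)) (w ^ (1/q)) * t ^ (1/p)) * ρ 1 := by
                refine mul_le_mul_of_nonneg_right (max_le ?_ ?_) hρ1.le
                · rw [e1]
                  exact mul_le_mul_of_nonneg_right (le_max_left _ _)
                    (Real.rpow_nonneg ht.le _)
                · rw [e2]
                  calc w ^ (1/q) * t ^ (1/q) ≤ w ^ (1/q) * t ^ (1/p) :=
                        mul_le_mul_of_nonneg_left e3 (Real.rpow_nonneg hw.le _)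
                    _ ≤ max (w ^ (1/p)) (w ^ (1/q)) * t ^ (1/p) :=
                        mul_le_mul_of_nonneg_right (le_max_right _ _)
                          (Real.rpow_nonneg ht.le _)
            _ = C * t ^ (1/p) := by rw [hC]; ring
        have h4 : t ^ (1 - 1/p) ≤ C := by
          have h5 : t ^ (1 - 1/p) * t ^ (1/p) ≤ C * t ^ (1/p) := by
            rw [← Real.rpow_add ht, show 1 - 1/p + 1/p = 1 by ring, Real.rpow_one]
            exact hts
          exact le_of_mul_le_mul_right h5 (Real.rpow_pos_of_pos ht _)
        have h6 : t ≤ C ^ (1 - 1/p)⁻¹ := by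
          have h7 := Real.rpow_le_rpow (Real.rpow_nonneg ht.le _) h4 (inv_nonneg.mpr hcp.le)
          rwa [← Real.rpow_mul ht.le, mul_inv_cancel₀ hcp.ne', Real.rpow_one] at h7
        exact hgoal (h6.trans (le_max_right _ _))
  have hSbdd : ∀ w : ℝ, 0 < w →
      BddAbove {x : ℝ | ∃ t : ℝ, 0 ≤ t ∧ x = w * t - Φ t} :=
    fun w hw => ⟨_, fun x hx => L3 w hw x hx⟩
  have hΦt_ge : ∀ w : ℝ, 0 < w → ∀ t : ℝ, 0 ≤ t → w * t - Φ t ≤ Φt w := by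
    intro w hw t ht
    rw [hΦt]
    exact le_csSup (hSbdd w hw) ⟨t, ht, rfl⟩
  have hΦt_le : ∀ w c : ℝ, 0 < w → (∀ t : ℝ, 0 ≤ t → w * t - Φ t ≤ c) → Φt w ≤ c := by
    intro w c hw h
    rw [hΦt]
    apply csSup_le ⟨0, hS0 w⟩
    rintro x ⟨t, ht, rfl⟩
    exact h t ht
  have hmono : ∀ a b : ℝ, 0 < a → a ≤ b → Φt a ≤ Φt b := by
    intro a b ha hab
    refine hΦt_le a _ ha fun t ht => ?_
    calc a * t - Φ t ≤ b * t - Φ t := by nlinarith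
      _ ≤ Φt b := hΦt_ge b (ha.trans_le hab) t ht
  have hrev : ∀ a b : ℝ, 0 < a → 0 < b → Φt a ≤ Φt b → a ≤ b := by
    intro a b ha hb h
    by_contra hab
    push_neg at hab
    have h1 : Φt a = Φt b := le_antisymm h (hmono b a hb hab.le)
    have h2 : a = b := by rw [← hΦtinv1 a ha, ← hΦtinv1 b hb, h1]
    exact absurd h2 (ne_of_gt hab)
  -- algebraic identity
  have L8 : ∀ u : ℝ, 0 < u →
      min (u ^ (1 - 1/q)) (u ^ (1 - 1/p)) * max (u ^ (1/p)) (u ^ (1/q)) = u := by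
    intro u hu
    have e1 : u ^ (1 - 1/q) = u / u ^ (1/q) := by rw [Real.rpow_sub hu, Real.rpow_one]
    have e2 : u ^ (1 - 1/p) = u / u ^ (1/p) := by rw [Real.rpow_sub hu, Real.rpow_one]
    have hup : 0 < u ^ (1/p) := Real.rpow_pos_of_pos hu _
    have huq : 0 < u ^ (1/q) := Real.rpow_pos_of_pos hu _
    rcases le_total (u ^ (1/p)) (u ^ (1/q)) with h | h
    · rw [e1, e2, max_eq_right h, min_eq_left ((div_le_div_iff_of_pos_left hu huq hup).mpr h)]
      exact div_mul_cancel₀ u huq.ne'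
    · rw [e1, e2, max_eq_left h, min_eq_right ((div_le_div_iff_of_pos_left hu hup huq).mpr h)]
      exact div_mul_cancel₀ u hup.ne'
  -- the key inequality for Φtinv
  have Lkey : ∀ u v : ℝ, 0 < u → 0 < v →
      min (u ^ (1 - 1/q)) (u ^ (1 - 1/p)) * Φtinv v ≤ Φtinv (u * v) := by
    intro u v hu hv
    set m := min (u ^ (1 - 1/q)) (u ^ (1 - 1/p)) with hm
    have hm0 : 0 < m := lt_min (Real.rpow_pos_of_pos hu _) (Real.rpow_pos_of_pos hu _)
    have hw0 : 0 < Φtinv v := hΦtinvpos v hv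
    have hfw : Φt (Φtinv v) = v := hΦtinv2 v hv
    set w := Φtinv v with hwdef
    have h1 : Φt (m * w) ≤ u * v := by
      refine hΦt_le _ _ (mul_pos hm0 hw0) fun t ht0 => ?_
      rcases eq_or_lt_of_le ht0 with rfl | ht
      · simp only [mul_zero, hΦ0, sub_zero]
        positivity
      · have hΦt0 := hΦpos t ht
        have hd : 0 < Φ t / u := div_pos hΦt0 hu
        have hτ0 : 0 < Φinv (Φ t / u) := hΦinvpos _ hd
        set τ := Φinv (Φ t / u) with hτ
        have hΦτ : Φ τ = Φ t / u := hinv2 _ hd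
        have h2 : w * τ - Φ τ ≤ v := hfw ▸ hΦt_ge w hw0 τ hτ0.le
        have h3 : t ≤ max (u ^ (1/p)) (u ^ (1/q)) * τ := by
          have h4 := L2 u (Φ t / u) hu hd
          have h5 : u * (Φ t / u) = Φ t := by field_simp
          rwa [h5, hinv1 t ht, ← hτ] at h4
        have huΦ : u * (Φ t / u) = Φ t := by field_simp
        calc m * w * t - Φ t ≤ m * w * (max (u ^ (1/p)) (u ^ (1/q)) * τ) - Φ t := by
              have := mul_le_mul_of_nonneg_left h3 (mul_pos hm0 hw0).le
              linarith
          _ = (m * max (u ^ (1/p)) (u ^ (1/q))) * (w * τ) - Φ t := by ring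
          _ = u * (w * τ) - Φ t := by rw [hm, L8 u hu]
          _ = u * (w * τ - Φ τ) := by rw [hΦτ, mul_sub, huΦ]
          _ ≤ u * v := mul_le_mul_of_nonneg_left h2 hu.le
    have h6 : u * v = Φt (Φtinv (u * v)) := (hΦtinv2 _ (mul_pos hu hv)).symm
    exact hrev _ _ (mul_pos hm0 hw0) (hΦtinvpos _ (mul_pos hu hv)) (h6 ▸ h1)
  -- integrability of the kernel
  have hgint : IntegrableOn
      (fun u : ℝ => max (u ^ (1 - 1/q - 1)) (u ^ (1 - 1/p - 1)) * Real.exp (-u))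
      (Ioi (0:ℝ)) := by
    have h1 := Real.GammaIntegral_convergent hcq
    have h2 := Real.GammaIntegral_convergent hcp
    refine Integrable.mono' (h1.add h2) ?_ ?_
    · apply Measurable.aestronglyMeasurable
      exact ((measurable_id'.pow_const _).max (measurable_id'.pow_const _)).mul
        measurable_neg.exp
    · filter_upwards [ae_restrict_mem measurableSet_Ioi] with u hu
      have hu0 : (0:ℝ) < u := hu
      have hmn1 : 0 ≤ u ^ (1 - 1/q - 1) := Real.rpow_nonneg hu0.le _
      have hmn2 : 0 ≤ u ^ (1 - 1/p - 1) := Real.rpow_nonneg hu0.le _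
      rw [Real.norm_eq_abs, abs_of_nonneg (by positivity)]
      have hmx : max (u ^ (1 - 1/q - 1)) (u ^ (1 - 1/p - 1))
          ≤ u ^ (1 - 1/q - 1) + u ^ (1 - 1/p - 1) :=
        max_le (le_add_of_nonneg_right hmn2) (le_add_of_nonneg_left hmn1)
      calc max (u ^ (1 - 1/q - 1)) (u ^ (1 - 1/p - 1)) * Real.exp (-u)
          ≤ (u ^ (1 - 1/q - 1) + u ^ (1 - 1/p - 1)) * Real.exp (-u) :=
            mul_le_mul_of_nonneg_right hmx (Real.exp_pos _).le
        _ = Real.exp (-u) * u ^ (1 - 1/q - 1) + Real.exp (-u) * u ^ (1 - 1/p - 1) := by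
            ring
  have hK := hgint.lintegral_lt_top
  refine ⟨hK, ?_⟩
  intro s hs
  set g : ℝ → ℝ := fun u => max (u ^ (1 - 1/q - 1)) (u ^ (1 - 1/p - 1)) * Real.exp (-u)
    with hg
  have hB : 0 < Φtinv s := hΦtinvpos s hs
  -- pointwise bound
  have hpt : ∀ t : ℝ, 0 < t →
      Real.exp (-(s * t)) / (t * Φtinv (1/t)) ≤ s * g (s * t) / Φtinv s := by
    intro t ht
    have hu0 : 0 < s * t := mul_pos hs ht
    set Mx := max ((s*t) ^ (1 - 1/q)) ((s*t) ^ (1 - 1/p)) with hMx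
    have hMx0 : 0 < Mx := lt_max_of_lt_left (Real.rpow_pos_of_pos hu0 _)
    have key := Lkey (s*t)⁻¹ s (inv_pos.mpr hu0) hs
    have h7 : (s*t)⁻¹ * s = 1/t := by field_simp
    rw [h7] at key
    have hmM : min ((s*t)⁻¹ ^ (1 - 1/q)) ((s*t)⁻¹ ^ (1 - 1/p)) = Mx⁻¹ := by
      rw [Real.inv_rpow hu0.le, Real.inv_rpow hu0.le]
      exact min_inv_eq' (Real.rpow_pos_of_pos hu0 _) (Real.rpow_pos_of_pos hu0 _)
    rw [hmM] at key
    have hA : 0 < Φtinv (1/t) := hΦtinvpos _ (by positivity)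
    have hden : 0 < Mx⁻¹ * Φtinv s := mul_pos (inv_pos.mpr hMx0) hB
    have step1 : Real.exp (-(s * t)) / (t * Φtinv (1/t))
        ≤ Real.exp (-(s * t)) / (t * (Mx⁻¹ * Φtinv s)) := by
      refine div_le_div_of_nonneg_left (Real.exp_pos _).le (by positivity) ?_
      exact mul_le_mul_of_nonneg_left key ht.le
    have hgst : g (s * t) = (Mx / (s * t)) * Real.exp (-(s * t)) := by
      rw [hg]
      simp only
      rw [Real.rpow_sub hu0 (1 - 1/q) 1, Real.rpow_sub hu0 (1 - 1/p) 1, Real.rpow_one,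
        max_div_div_right hu0.le]
    have step2 : s * g (s * t) / Φtinv s
        = Real.exp (-(s * t)) / (t * (Mx⁻¹ * Φtinv s)) := by
      rw [hgst]
      field_simp
    exact step1.trans step2.symm.le
  -- assemble
  calc (∫⁻ t in Set.Ioi (0:ℝ), ENNReal.ofReal (Real.exp (-(s * t)) / (t * Φtinv (1/t))))
      ≤ ∫⁻ t in Set.Ioi (0:ℝ), ENNReal.ofReal (s * g (s * t) / Φtinv s) := by
        refine lintegral_mono_ae ?_
        filter_upwards [ae_restrict_mem measurableSet_Ioi] with t ht
        exact ENNReal.ofReal_le_ofReal (hpt t ht)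
    _ = ∫⁻ t in Set.Ioi (0:ℝ), ENNReal.ofReal (s * g (s * t)) / ENNReal.ofReal (Φtinv s) := by
        refine lintegral_congr fun t => ?_
        exact ENNReal.ofReal_div_of_pos hB
    _ = (∫⁻ t in Set.Ioi (0:ℝ), ENNReal.ofReal (s * g (s * t))) / ENNReal.ofReal (Φtinv s) := by
        simp only [div_eq_mul_inv]
        exact lintegral_mul_const' _ _
          (ENNReal.inv_ne_top.mpr (ENNReal.ofReal_pos.mpr hB).ne')
    _ = (∫⁻ u in Set.Ioi (0:ℝ), ENNReal.ofReal (g u)) / ENNReal.ofReal (Φtinv s) := by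
        congr 1
        have hgnn : ∀ᵐ u ∂(volume.restrict (Set.Ioi (0:ℝ))), 0 ≤ g u := by
          filter_upwards [ae_restrict_mem measurableSet_Ioi] with u hu
          have hu0 : (0:ℝ) < u := hu
          rw [hg]
          simp only
          positivity
        have hsgnn : ∀ᵐ t ∂(volume.restrict (Set.Ioi (0:ℝ))), 0 ≤ s * g (s * t) := by
          filter_upwards [ae_restrict_mem measurableSet_Ioi] with t ht
          have hst : (0:ℝ) < s * t := mul_pos hs ht
          rw [hg]
          simp only
          positivity
        have hint2 : IntegrableOn (fun t => s * g (s * t)) (Set.Ioi (0:ℝ)) := by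
          apply Integrable.const_mul
          exact (integrableOn_Ioi_comp_mul_left_iff g 0 hs).mpr
            (by rw [mul_zero]; exact hgint)
        rw [← ofReal_integral_eq_lintegral_ofReal hint2 hsgnn,
          ← ofReal_integral_eq_lintegral_ofReal hgint hgnn]
        congr 1
        rw [MeasureTheory.integral_const_mul, integral_comp_mul_left_Ioi g 0 hs, mul_zero,
          smul_eq_mul, ← mul_assoc, mul_inv_cancel₀ hs.ne', one_mul]
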